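/- For every σ ∈ (0, 1/8) there exists a constant C = C(σ) such that for all t ≥ 1 and all α ∈ ℝ: ∑_{k=0}^{∞} 2^{kσ}·min( 2^{−k/2}, 2^{k/2}/(|α| + 2^{−k/2}·t) ) ≤ C·(|α| + t^{2/3})^{σ − 1/2}. -/

import Mathlib

open Real Finset

private lemma geom_head_le (q : ℝ) (hq : 1 < q) (N : ℕ) :
    ∑ k ∈ Finset.range N, q ^ k ≤ q ^ N / (q - 1) := by
  rw [geom_sum_eq (ne_of_gt hq)]
  have h1 : (0:ℝ) < q - 1 := by linarith
  gcongr
  linarith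

private lemma two_rpow_pow (c : ℝ) (k : ℕ) : ((2:ℝ)^c)^k = (2:ℝ)^((k:ℝ)*c) := by
  rw [← Real.rpow_natCast ((2:ℝ)^c) k, ← Real.rpow_mul (by norm_num), mul_comm]

set_option maxHeartbeats 1600000 in
theorem dyadic_low_frequency_summation (σ : ℝ) (hσ0 : 0 < σ) (hσ : σ < 1/8) :
    ∃ C : ℝ, ∀ t : ℝ, 1 ≤ t → ∀ α : ℝ,
      (∑' k : ℕ, (2 : ℝ) ^ ((k : ℝ) * σ) *
          min ((2 : ℝ) ^ (-(k : ℝ)/2))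
            ((2 : ℝ) ^ ((k : ℝ)/2) / (|α| + (2 : ℝ) ^ (-(k : ℝ)/2) * t)))
        ≤ C * (|α| + t ^ ((2 : ℝ)/3)) ^ (σ - 1/2) := by
  have h2 : (0:ℝ) < 2 := two_pos
  set r : ℝ := (2:ℝ)^(σ - 1/2) with hr_def
  have hr0 : 0 < r := rpow_pos_of_pos h2 _
  have hr1 : r < 1 := rpow_lt_one_of_one_lt_of_neg one_lt_two (by linarith)
  set qA : ℝ := (2:ℝ)^(σ + 1/2) with hqA_def
  have hqA : 1 < qA := (Real.one_lt_rpow_iff_of_pos h2).mpr (Or.inl ⟨one_lt_two, by linarith⟩)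
  set qB : ℝ := (2:ℝ)^(σ + 1) with hqB_def
  have hqB : 1 < qB := (Real.one_lt_rpow_iff_of_pos h2).mpr (Or.inl ⟨one_lt_two, by linarith⟩)
  clear_value r qA qB
  refine ⟨(1 - r)⁻¹ + (2:ℝ)^(σ + 3/2)/(qA - 1) + (4:ℝ)^(σ+1)*(2:ℝ)^(1/2 - σ)/(qB - 1), ?_⟩
  intro t ht α
  have htpos : (0:ℝ) < t := by linarith
  have ht23 : (1:ℝ) ≤ t ^ ((2:ℝ)/3) := by
    have := Real.rpow_le_rpow (by norm_num) ht (by norm_num : (0:ℝ) ≤ 2/3)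
    rwa [one_rpow] at this
  have htX : (0:ℝ) < t ^ ((2:ℝ)/3) := by linarith
  set M : ℝ := |α| + t ^ ((2:ℝ)/3) with hM_def
  have habs : (0:ℝ) ≤ |α| := abs_nonneg α
  have hM1 : (1:ℝ) ≤ M := by rw [hM_def]; linarith
  have hMpos : (0:ℝ) < M := by linarith
  have hMr_pos : (0:ℝ) < M ^ (σ - 1/2) := rpow_pos_of_pos hMpos _
  set f : ℕ → ℝ := fun k => (2 : ℝ) ^ ((k : ℝ) * σ) *
      min ((2 : ℝ) ^ (-(k : ℝ)/2))
        ((2 : ℝ) ^ ((k : ℝ)/2) / (|α| + (2 : ℝ) ^ (-(k : ℝ)/2) * t)) with hf_def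
  clear_value M f
  have hDpos : ∀ k : ℕ, (0:ℝ) < |α| + (2:ℝ)^(-(k:ℝ)/2) * t :=
    fun k => add_pos_of_nonneg_of_pos habs (mul_pos (rpow_pos_of_pos h2 _) htpos)
  have hf_nonneg : ∀ k, 0 ≤ f k := by
    intro k
    simp only [hf_def]
    exact mul_nonneg (rpow_pos_of_pos h2 _).le
      (le_min (rpow_pos_of_pos h2 _).le (div_nonneg (rpow_pos_of_pos h2 _).le (hDpos k).le))
  have hfr : ∀ k, f k ≤ r ^ k := by
    intro k
    simp only [hf_def]
    have h1 : (2:ℝ)^((k:ℝ)*σ) * min ((2:ℝ)^(-(k:ℝ)/2))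
        ((2:ℝ)^((k:ℝ)/2) / (|α| + (2:ℝ)^(-(k:ℝ)/2) * t))
        ≤ (2:ℝ)^((k:ℝ)*σ) * (2:ℝ)^(-(k:ℝ)/2) :=
      mul_le_mul_of_nonneg_left (min_le_left _ _) (rpow_pos_of_pos h2 _).le
    refine h1.trans_eq ?_
    rw [hr_def, two_rpow_pow, ← Real.rpow_add h2]
    congr 1; ring
  have hgeom : Summable (fun k : ℕ => r ^ k) := summable_geometric_of_lt_one hr0.le hr1
  have hsum_f : Summable f := Summable.of_nonneg_of_le hf_nonneg hfr hgeom
  -- choice of the cut N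
  set N : ℕ := ⌊Real.logb 2 M⌋₊ + 1 with hN_def
  clear_value N
  have hlogb0 : 0 ≤ Real.logb 2 M := Real.logb_nonneg one_lt_two hM1
  have hMN : M ≤ (2:ℝ)^N := by
    have h1 : Real.logb 2 M < ((⌊Real.logb 2 M⌋₊ : ℝ) + 1) := Nat.lt_floor_add_one _
    calc M = (2:ℝ) ^ (Real.logb 2 M) := (Real.rpow_logb h2 (by norm_num) hMpos).symm
      _ ≤ (2:ℝ) ^ ((N:ℝ)) := by
          apply Real.rpow_le_rpow_of_exponent_le one_le_two
          rw [hN_def]; push_cast; linarith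
      _ = (2:ℝ)^N := Real.rpow_natCast 2 N
  have hN2M : ((2:ℝ)^N : ℝ) ≤ 2 * M := by
    have h0 : ((⌊Real.logb 2 M⌋₊ : ℝ)) ≤ Real.logb 2 M := Nat.floor_le hlogb0
    calc (2:ℝ)^N = 2 * (2:ℝ)^(⌊Real.logb 2 M⌋₊) := by rw [hN_def, pow_succ]; ring
      _ ≤ 2 * (2:ℝ)^(Real.logb 2 M) := by
          have : ((2:ℝ)^(⌊Real.logb 2 M⌋₊ : ℕ)) ≤ (2:ℝ)^(Real.logb 2 M) := by
            rw [← Real.rpow_natCast (2:ℝ)]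
            exact Real.rpow_le_rpow_of_exponent_le one_le_two h0
          linarith
      _ = 2 * M := by rw [Real.rpow_logb h2 (by norm_num) hMpos]
  have h2Npos : (0:ℝ) < (2:ℝ)^N := by positivity
  -- split the sum
  have hsplit : ∑ i ∈ Finset.range N, f i + ∑' i, f (i + N) = ∑' i, f i :=
    Summable.sum_add_tsum_nat_add N hsum_f
  -- tail bound
  have htail : ∑' i, f (i + N) ≤ (1 - r)⁻¹ * M ^ (σ - 1/2) := by
    have h1 : ∑' i, f (i + N) ≤ ∑' i : ℕ, r ^ (i + N) :=
      Summable.tsum_le_tsum (fun i => hfr (i + N)) ((summable_nat_add_iff N).mpr hsum_f)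
        ((summable_nat_add_iff N).mpr hgeom)
    have h2' : ∑' i : ℕ, r ^ (i + N) = r ^ N * (1 - r)⁻¹ := by
      simp_rw [pow_add]
      rw [tsum_mul_right, tsum_geometric_of_lt_one hr0.le hr1]
      ring
    have h3 : r ^ N ≤ M ^ (σ - 1/2) := by
      have he : r ^ N = ((2:ℝ)^N) ^ (σ - 1/2) := by
        rw [hr_def, two_rpow_pow, ← Real.rpow_natCast (2:ℝ) N,
          ← Real.rpow_mul (by norm_num)]
      rw [he]
      exact Real.rpow_le_rpow_of_nonpos hMpos hMN (by linarith)
    have hinv : (0:ℝ) < (1 - r)⁻¹ := by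
      apply inv_pos.mpr; linarith
    calc ∑' i, f (i + N) ≤ r ^ N * (1 - r)⁻¹ := h1.trans_eq h2'
      _ ≤ M ^ (σ - 1/2) * (1 - r)⁻¹ := by nlinarith
      _ = (1 - r)⁻¹ * M ^ (σ - 1/2) := by ring
  -- head bound, by cases
  have hhead : ∑ k ∈ Finset.range N, f k ≤
      ((2:ℝ)^(σ + 3/2)/(qA - 1) + (4:ℝ)^(σ+1)*(2:ℝ)^(1/2 - σ)/(qB - 1)) * M ^ (σ - 1/2) := by
    have hBconst_pos : (0:ℝ) ≤ (4:ℝ)^(σ+1)*(2:ℝ)^(1/2 - σ)/(qB - 1) := by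
      apply div_nonneg _ (by linarith)
      positivity
    have hAconst_pos : (0:ℝ) ≤ (2:ℝ)^(σ + 3/2)/(qA - 1) := by
      apply div_nonneg _ (by linarith)
      positivity
    have hqA1 : qA - 1 ≠ 0 := by linarith
    have hqB1 : qB - 1 ≠ 0 := by linarith
    have hM0 : M ≠ 0 := ne_of_gt hMpos
    rcases le_or_gt (t ^ ((2:ℝ)/3)) |α| with hcase | hcase
    · -- Case A : |α| dominates
      have hα1 : (1:ℝ) ≤ |α| := le_trans ht23 hcase
      have hαpos : (0:ℝ) < |α| := by linarith
      have hM2α : M ≤ 2 * |α| := by rw [hM_def]; linarith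
      have hterm : ∀ k, f k ≤ qA ^ k * (2 / M) := by
        intro k
        simp only [hf_def]
        have h1 : (2:ℝ)^((k:ℝ)*σ) * min ((2:ℝ)^(-(k:ℝ)/2))
            ((2:ℝ)^((k:ℝ)/2) / (|α| + (2:ℝ)^(-(k:ℝ)/2) * t)) ≤ (2:ℝ)^((k:ℝ)*σ) * ((2:ℝ)^((k:ℝ)/2) / |α|) := by
          apply mul_le_mul_of_nonneg_left _ (rpow_pos_of_pos h2 _).le
          refine (min_le_right _ _).trans ?_
          apply div_le_div_of_nonneg_left (rpow_pos_of_pos h2 _).le hαpos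
          nlinarith [mul_pos (rpow_pos_of_pos h2 (-(k:ℝ)/2)) htpos]
        have h2' : (2:ℝ)^((k:ℝ)*σ) * ((2:ℝ)^((k:ℝ)/2) / |α|) = qA ^ k / |α| := by
          rw [hqA_def, two_rpow_pow, ← mul_div_assoc, ← Real.rpow_add h2]
          congr 2; ring
        have h3 : qA ^ k / |α| ≤ qA ^ k * (2 / M) := by
          rw [div_eq_mul_inv]
          apply mul_le_mul_of_nonneg_left _ (pow_pos (by linarith : (0:ℝ) < qA) k).le
          have : (1:ℝ)/|α| ≤ 2/M := by
            rw [div_le_div_iff₀ hαpos hMpos]; linarith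
          simpa [one_div] using this
        exact (h1.trans_eq h2').trans h3
      have hqAN : qA ^ N ≤ (2*M) ^ (σ + 1/2) := by
        have he : qA ^ N = ((2:ℝ)^N) ^ (σ + 1/2) := by
          rw [hqA_def, two_rpow_pow, ← Real.rpow_natCast (2:ℝ) N,
            ← Real.rpow_mul (by norm_num)]
        rw [he]
        exact Real.rpow_le_rpow h2Npos.le hN2M (by linarith)
      calc ∑ k ∈ Finset.range N, f k
          ≤ ∑ k ∈ Finset.range N, qA ^ k * (2 / M) :=
            Finset.sum_le_sum (fun k _ => hterm k)
        _ = (∑ k ∈ Finset.range N, qA ^ k) * (2 / M) := by rw [← Finset.sum_mul]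
        _ ≤ (qA ^ N / (qA - 1)) * (2 / M) := by
            apply mul_le_mul_of_nonneg_right (geom_head_le qA hqA N)
              (div_nonneg (by norm_num) hMpos.le)
        _ ≤ ((2*M) ^ (σ + 1/2) / (qA - 1)) * (2 / M) := by
            apply mul_le_mul_of_nonneg_right _ (div_nonneg (by norm_num) hMpos.le)
            exact (div_le_div_iff_of_pos_right (by linarith : (0:ℝ) < qA - 1)).mpr hqAN
        _ = (2:ℝ)^(σ + 3/2)/(qA - 1) * M ^ (σ - 1/2) := by
            rw [Real.mul_rpow (by norm_num) hMpos.le]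
            have e1 : (2:ℝ)^(σ + 3/2) = (2:ℝ)^(σ + 1/2) * 2 := by
              rw [show (σ + 3/2) = (σ + 1/2) + 1 by ring, Real.rpow_add h2, Real.rpow_one]
            have e2 : M ^ (σ + 1/2) = M ^ (σ - 1/2) * M := by
              rw [show (σ + 1/2) = (σ - 1/2) + 1 by ring, Real.rpow_add hMpos, Real.rpow_one]
            rw [e1, e2]
            have key : ∀ a x m q : ℝ, m ≠ 0 →
                a * (x * m) / q * (2 / m) = a * 2 / q * x := by
              intro a x m q hm
              field_simp
            exact key _ _ _ _ hM0
        _ ≤ ((2:ℝ)^(σ + 3/2)/(qA - 1) + (4:ℝ)^(σ+1)*(2:ℝ)^(1/2 - σ)/(qB - 1)) * M ^ (σ - 1/2) := by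
            nlinarith
    · -- Case B : t^{2/3} dominates
      have hM2t : M ≤ 2 * t ^ ((2:ℝ)/3) := by rw [hM_def]; linarith
      have hterm : ∀ k, f k ≤ qB ^ k * (1 / t) := by
        intro k
        simp only [hf_def]
        have h1 : (2:ℝ)^((k:ℝ)*σ) * min ((2:ℝ)^(-(k:ℝ)/2))
            ((2:ℝ)^((k:ℝ)/2) / (|α| + (2:ℝ)^(-(k:ℝ)/2) * t)) ≤ (2:ℝ)^((k:ℝ)*σ) *
            ((2:ℝ)^((k:ℝ)/2) / ((2:ℝ)^(-(k:ℝ)/2) * t)) := by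
          apply mul_le_mul_of_nonneg_left _ (rpow_pos_of_pos h2 _).le
          refine (min_le_right _ _).trans ?_
          apply div_le_div_of_nonneg_left (rpow_pos_of_pos h2 _).le
            (mul_pos (rpow_pos_of_pos h2 _) htpos)
          linarith
        have h2' : (2:ℝ)^((k:ℝ)*σ) * ((2:ℝ)^((k:ℝ)/2) / ((2:ℝ)^(-(k:ℝ)/2) * t))
            = qB ^ k * (1 / t) := by
          have ha : ((2:ℝ)^(-(k:ℝ)/2)) = ((2:ℝ)^((k:ℝ)/2))⁻¹ := by
            rw [← Real.rpow_neg h2.le]; congr 1; ring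
          have hne : ((2:ℝ)^((k:ℝ)/2)) ≠ 0 := (rpow_pos_of_pos h2 _).ne'
          rw [hqB_def, two_rpow_pow, ha, div_eq_mul_inv, mul_inv, inv_inv, one_div,
            ← mul_assoc, ← mul_assoc, ← Real.rpow_add h2, ← Real.rpow_add h2]
          congr 2
          ring
        exact h1.trans_eq h2'
      have hqBN : qB ^ N ≤ (2*M) ^ (σ + 1) := by
        have he : qB ^ N = ((2:ℝ)^N) ^ (σ + 1) := by
          rw [hqB_def, two_rpow_pow, ← Real.rpow_natCast (2:ℝ) N,
            ← Real.rpow_mul (by norm_num)]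
        rw [he]
        exact Real.rpow_le_rpow h2Npos.le hN2M (by linarith)
      have h4X : (2*M) ^ (σ + 1) ≤ (4 * t ^ ((2:ℝ)/3)) ^ (σ + 1) := by
        apply Real.rpow_le_rpow (by linarith) (by linarith) (by linarith)
      have hXpow : (4 * t ^ ((2:ℝ)/3)) ^ (σ + 1)
          = (4:ℝ)^(σ+1) * t ^ ((2:ℝ)/3 * (σ + 1)) := by
        rw [Real.mul_rpow (by norm_num) htX.le, ← Real.rpow_mul htpos.le]
      have hts : t ^ ((2:ℝ)/3 * (σ + 1)) * (1/t) = t ^ ((2*σ - 1)/3) := by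
        rw [show ((2*σ - 1)/3) = (2:ℝ)/3 * (σ + 1) + (-1) by ring,
          Real.rpow_add htpos, Real.rpow_neg_one]
        ring
      have htM : t ^ ((2*σ - 1)/3) ≤ (2:ℝ)^(1/2 - σ) * M ^ (σ - 1/2) := by
        have hb : (2 * t ^ ((2:ℝ)/3)) ^ (σ - 1/2) ≤ M ^ (σ - 1/2) :=
          Real.rpow_le_rpow_of_nonpos hMpos hM2t (by linarith)
        have he : (2 * t ^ ((2:ℝ)/3)) ^ (σ - 1/2)
            = (2:ℝ)^(σ - 1/2) * t ^ ((2*σ - 1)/3) := by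
          rw [Real.mul_rpow (by norm_num) htX.le, ← Real.rpow_mul htpos.le]
          congr 2; ring
        have hcc : (2:ℝ)^(1/2 - σ) * (2:ℝ)^(σ - 1/2) = 1 := by
          rw [← Real.rpow_add h2]; norm_num
        calc t ^ ((2*σ - 1)/3)
            = (2:ℝ)^(1/2 - σ) * ((2:ℝ)^(σ - 1/2) * t ^ ((2*σ - 1)/3)) := by
              rw [← mul_assoc, hcc, one_mul]
          _ ≤ (2:ℝ)^(1/2 - σ) * M ^ (σ - 1/2) := by
              apply mul_le_mul_of_nonneg_left _ (rpow_pos_of_pos h2 _).le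
              rw [← he]; exact hb
      calc ∑ k ∈ Finset.range N, f k
          ≤ ∑ k ∈ Finset.range N, qB ^ k * (1 / t) :=
            Finset.sum_le_sum (fun k _ => hterm k)
        _ = (∑ k ∈ Finset.range N, qB ^ k) * (1 / t) := by rw [← Finset.sum_mul]
        _ ≤ (qB ^ N / (qB - 1)) * (1 / t) := by
            apply mul_le_mul_of_nonneg_right (geom_head_le qB hqB N)
              (div_nonneg zero_le_one htpos.le)
        _ ≤ ((4 * t ^ ((2:ℝ)/3)) ^ (σ + 1) / (qB - 1)) * (1 / t) := by
            apply mul_le_mul_of_nonneg_right _ (div_nonneg zero_le_one htpos.le)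
            exact (div_le_div_iff_of_pos_right (by linarith : (0:ℝ) < qB - 1)).mpr
              (hqBN.trans h4X)
        _ = (4:ℝ)^(σ+1) / (qB - 1) * (t ^ ((2:ℝ)/3 * (σ + 1)) * (1/t)) := by
            rw [hXpow]; ring
        _ = (4:ℝ)^(σ+1) / (qB - 1) * t ^ ((2*σ - 1)/3) := by rw [hts]
        _ ≤ (4:ℝ)^(σ+1) / (qB - 1) * ((2:ℝ)^(1/2 - σ) * M ^ (σ - 1/2)) := by
            apply mul_le_mul_of_nonneg_left htM
            exact div_nonneg (by positivity) (by linarith)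
        _ = (4:ℝ)^(σ+1)*(2:ℝ)^(1/2 - σ)/(qB - 1) * M ^ (σ - 1/2) := by ring
        _ ≤ ((2:ℝ)^(σ + 3/2)/(qA - 1) + (4:ℝ)^(σ+1)*(2:ℝ)^(1/2 - σ)/(qB - 1)) * M ^ (σ - 1/2) := by
            nlinarith
  calc (∑' k, f k) = ∑ k ∈ Finset.range N, f k + ∑' i, f (i + N) := hsplit.symm
    _ ≤ ((2:ℝ)^(σ + 3/2)/(qA - 1) + (4:ℝ)^(σ+1)*(2:ℝ)^(1/2 - σ)/(qB - 1)) * M ^ (σ - 1/2)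
        + (1 - r)⁻¹ * M ^ (σ - 1/2) := add_le_add hhead htail
    _ = ((1 - r)⁻¹ + (2:ℝ)^(σ + 3/2)/(qA - 1) + (4:ℝ)^(σ+1)*(2:ℝ)^(1/2 - σ)/(qB - 1))
        * M ^ (σ - 1/2) := by ring
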